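/- In K = ℍ ⊕ ℍε, if Q₁ = q_{r1} + q_{d1}ε and Q₂ = q_{r2} + q_{d2}ε satisfy the orthogonality conditions q_{r1}q_{d1}† + q_{d1}q_{r1}† = 0 and q_{r2}q_{d2}† + q_{d2}q_{r2}† = 0, then the product Q₃ = Q₁Q₂ = q_{r3} + q_{d3}ε, with q_{r3} = q_{r1}q_{r2} + q_{d1}q_{d2} and q_{d3} = q_{r1}q_{d2} + q_{d1}q_{r2}, also satisfies q_{r3}q_{d3}† + q_{d3}q_{r3}† = 0. -/

import Mathlib

/-- if `q_{r1}q_{d1}† + q_{d1}q_{r1}† = 0` and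
`q_{r2}q_{d2}† + q_{d2}q_{r2}† = 0`, then the components
`q_{r3} = q_{r1}q_{r2} + q_{d1}q_{d2}` and `q_{d3} = q_{r1}q_{d2} + q_{d1}q_{r2}`
of the product in `K = ℍ ⊕ ℍε` satisfy `q_{r3}q_{d3}† + q_{d3}q_{r3}† = 0`. -/
theorem stmt8 (qr1 qd1 qr2 qd2 : Quaternion ℝ)
    (h₁ : qr1 * star qd1 + qd1 * star qr1 = 0)
    (h₂ : qr2 * star qd2 + qd2 * star qr2 = 0) :
    (qr1 * qr2 + qd1 * qd2) * star (qr1 * qd2 + qd1 * qr2) +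
      (qr1 * qd2 + qd1 * qr2) * star (qr1 * qr2 + qd1 * qd2) = 0 := by
  have e1 : (qr1 * star qd1).re = 0 := by
    have := congrArg QuaternionAlgebra.re h₁
    simp [Quaternion.re_mul, Quaternion.re_star, Quaternion.imI_star,
      Quaternion.imJ_star, Quaternion.imK_star, Quaternion.re_zero] at this ⊢
    linarith
  have e2 : (qr2 * star qd2).re = 0 := by
    have := congrArg QuaternionAlgebra.re h₂
    simp [Quaternion.re_mul, Quaternion.re_star, Quaternion.imI_star,
      Quaternion.imJ_star, Quaternion.imK_star, Quaternion.re_zero] at this ⊢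
    linarith
  have hre : ((qr1 * qr2 + qd1 * qd2) * star (qr1 * qd2 + qd1 * qr2)).re = 0 := by
    simp only [Quaternion.re_mul, Quaternion.re_add, Quaternion.imI_add, Quaternion.imJ_add,
      Quaternion.imK_add, Quaternion.imI_mul, Quaternion.imJ_mul, Quaternion.imK_mul,
      Quaternion.re_star, Quaternion.imI_star, Quaternion.imJ_star, Quaternion.imK_star] at e1 e2 ⊢
    linear_combination (qr2.re^2 + qr2.imI^2 + qr2.imJ^2 + qr2.imK^2 + qd2.re^2 +
        qd2.imI^2 + qd2.imJ^2 + qd2.imK^2) * e1 +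
      (qr1.re^2 + qr1.imI^2 + qr1.imJ^2 + qr1.imK^2 + qd1.re^2 +
        qd1.imI^2 + qd1.imJ^2 + qd1.imK^2) * e2
  have key : (qr1 * qd2 + qd1 * qr2) * star (qr1 * qr2 + qd1 * qd2)
      = star ((qr1 * qr2 + qd1 * qd2) * star (qr1 * qd2 + qd1 * qr2)) := by
    simp [star_mul]
  rw [key, Quaternion.self_add_star', hre, mul_zero]
  norm_cast
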